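/- arXiv:1805.11270 — 2 statements merged into one kernel-verified Lean document; each statement's English description precedes it below -/
import Mathlib

section
/- Let G be a simple graph with vertex set {v_1,…,v_n} and m edges, and let t_1,…,t_n be nonnegative integers. Let G_P be the graph obtained from G by attaching, at each vertex v_i, t_i pendant paths of order r ≥ 2 (identifying v_i with an endpoint of each path). Then HM(G_P) = HM(G) + 2 Σ_{v_i v_j ∈ E(G)} (d(v_i)+d(v_j))(t_i+t_j) + Σ_{v_i v_j ∈ E(G)} (t_i+t_j)^2 + (16r−35) Σ_i t_i + Σ_i [t_i d(v_i)^2 + t_i^3 + 4t_i^2 + 2t_i^2 d(v_i) + 4 t_i d(v_i)]. -/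
open Finset

variable {V : Type*}

/-- Edge set of `G` as a `Finset`, using classical decidability. -/
noncomputable def edgeFS [Fintype V] (G : SimpleGraph V) : Finset (Sym2 V) :=
  letI := Classical.decEq V
  letI : DecidableRel G.Adj := Classical.decRel _
  G.edgeFinset

/-- Degree of a vertex, using classical decidability. -/
noncomputable def deg [Fintype V] (G : SimpleGraph V) (v : V) : ℕ :=
  letI : DecidableRel G.Adj := Classical.decRel _
  G.degree v

/-- Sum over the edges of `G` of a symmetric integer-valued function of the endpoints. -/
noncomputable def edgeSum [Fintype V] (G : SimpleGraph V) (f : V → V → ℤ)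
    (hf : ∀ u v, f u v = f v u) : ℤ :=
  ∑ e ∈ edgeFS G, Sym2.lift ⟨f, hf⟩ e

/-- The hyper Zagreb index `HM(G) = Σ_{uv ∈ E(G)} (d(u)+d(v))²`. -/
noncomputable def hm [Fintype V] (G : SimpleGraph V) : ℕ :=
  ∑ e ∈ edgeFS G, Sym2.lift ⟨fun u v => (deg G u + deg G v) ^ 2,
    fun u v => by simp [add_comm]⟩ e

/-- The first Zagreb index `M₁(G) = Σ_v d(v)²`. -/
noncomputable def m1 [Fintype V] (G : SimpleGraph V) : ℕ :=
  ∑ v, (deg G v) ^ 2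


variable {V : Type*}

/-- Type-I generalized thorn graph `G_P`: attach `t v` pendant paths of order `r`
(i.e. with `r - 1` new vertices each) at each vertex `v` of `G`,
identifying `v` with an endpoint of each path. -/
def thornPath (G : SimpleGraph V) (t : V → ℕ) (r : ℕ) :
    SimpleGraph (V ⊕ ((Σ v : V, Fin (t v)) × Fin (r - 1))) where
  Adj x y :=
    match x, y with
    | Sum.inl u, Sum.inl v => G.Adj u v
    | Sum.inl u, Sum.inr (p, j) => p.1 = u ∧ j.val = 0
    | Sum.inr (p, j), Sum.inl u => p.1 = u ∧ j.val = 0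
    | Sum.inr (p, j), Sum.inr (q, j') => p = q ∧ (j.val + 1 = j'.val ∨ j'.val + 1 = j.val)
  symm := by
    constructor
    rintro (u | ⟨p, j⟩) (v | ⟨q, j'⟩) h
    · exact G.adj_symm h
    · exact h
    · exact h
    · exact ⟨h.1.symm, h.2.symm⟩
  loopless := by
    constructor
    rintro (u | ⟨p, j⟩) h
    · exact G.loopless.irrefl u h
    · omega

/-- Type-II generalized thorn graph `G_C`: attach `t v` cycles of length `r`
at each vertex `v` of `G`, identifying `v` with one vertex of each cycle. -/
def thornCycle (G : SimpleGraph V) (t : V → ℕ) (r : ℕ) :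
    SimpleGraph (V ⊕ ((Σ v : V, Fin (t v)) × Fin (r - 1))) where
  Adj x y :=
    match x, y with
    | Sum.inl u, Sum.inl v => G.Adj u v
    | Sum.inl u, Sum.inr (p, j) => p.1 = u ∧ (j.val = 0 ∨ j.val = r - 2)
    | Sum.inr (p, j), Sum.inl u => p.1 = u ∧ (j.val = 0 ∨ j.val = r - 2)
    | Sum.inr (p, j), Sum.inr (q, j') => p = q ∧ (j.val + 1 = j'.val ∨ j'.val + 1 = j.val)
  symm := by
    constructor
    rintro (u | ⟨p, j⟩) (v | ⟨q, j'⟩) h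
    · exact G.adj_symm h
    · exact h
    · exact h
    · exact ⟨h.1.symm, h.2.symm⟩
  loopless := by
    constructor
    rintro (u | ⟨p, j⟩) h
    · exact G.loopless.irrefl u h
    · omega

/-- Type-III generalized thorn graph `G_K`: attach `t v` copies of the complete graph `K_r`
at each vertex `v` of `G`, identifying `v` with one vertex of each copy. -/
def thornComplete (G : SimpleGraph V) (t : V → ℕ) (r : ℕ) :
    SimpleGraph (V ⊕ ((Σ v : V, Fin (t v)) × Fin (r - 1))) where
  Adj x y :=
    match x, y with
    | Sum.inl u, Sum.inl v => G.Adj u v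
    | Sum.inl u, Sum.inr (p, j) => p.1 = u
    | Sum.inr (p, j), Sum.inl u => p.1 = u
    | Sum.inr (p, j), Sum.inr (q, j') => p = q ∧ j ≠ j'
  symm := by
    constructor
    rintro (u | ⟨p, j⟩) (v | ⟨q, j'⟩) h
    · exact G.adj_symm h
    · exact h
    · exact h
    · exact ⟨h.1.symm, h.2.symm⟩
  loopless := by
    constructor
    rintro (u | ⟨p, j⟩) h
    · exact G.loopless.irrefl u h
    · exact h.2 rfl

/-- Type-IV generalized thorn graph `G_A`: attach `t v` copies of the complete bipartite
graph `K_{r,s}` at each vertex `v`, identifying `v` with one vertex of the part of size `r`. -/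
def thornBipartite (G : SimpleGraph V) (t : V → ℕ) (r s : ℕ) :
    SimpleGraph (V ⊕ ((Σ v : V, Fin (t v)) × (Fin (r - 1) ⊕ Fin s))) where
  Adj x y :=
    match x, y with
    | Sum.inl u, Sum.inl v => G.Adj u v
    | Sum.inl u, Sum.inr (p, x) => p.1 = u ∧ x.isRight
    | Sum.inr (p, x), Sum.inl u => p.1 = u ∧ x.isRight
    | Sum.inr (p, x), Sum.inr (q, y) => p = q ∧ x.isLeft ≠ y.isLeft
  symm := by
    constructor
    rintro (u | ⟨p, x⟩) (v | ⟨q, y⟩) h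
    · exact G.adj_symm h
    · exact h
    · exact h
    · exact ⟨h.1.symm, h.2.symm⟩
  loopless := by
    constructor
    rintro (u | ⟨p, x⟩) h
    · exact G.loopless.irrefl u h
    · exact h.2 rfl

/-- Type-V generalized thorn graph `G_{C'}`: join `t v` disjoint copies of the cycle `C_r`
to each vertex `v` of `G`, each by a new bridge edge. -/
def joinedCycle (G : SimpleGraph V) (t : V → ℕ) (r : ℕ) :
    SimpleGraph (V ⊕ ((Σ v : V, Fin (t v)) × Fin r)) where
  Adj x y :=
    match x, y with
    | Sum.inl u, Sum.inl v => G.Adj u v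
    | Sum.inl u, Sum.inr (p, j) => p.1 = u ∧ j.val = 0
    | Sum.inr (p, j), Sum.inl u => p.1 = u ∧ j.val = 0
    | Sum.inr (p, j), Sum.inr (q, j') =>
        p = q ∧ j ≠ j' ∧ ((j.val + 1) % r = j'.val ∨ (j'.val + 1) % r = j.val)
  symm := by
    constructor
    rintro (u | ⟨p, j⟩) (v | ⟨q, j'⟩) h
    · exact G.adj_symm h
    · exact h
    · exact h
    · exact ⟨h.1.symm, h.2.1.symm, h.2.2.symm⟩
  loopless := by
    constructor
    rintro (u | ⟨p, j⟩) h
    · exact G.loopless.irrefl u h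
    · exact h.2.1 rfl

/-- Type-VI generalized thorn graph `G_{K'}`: join `t v` disjoint copies of the complete
graph `K_r` to each vertex `v` of `G`, each by a new bridge edge. -/
def joinedComplete (G : SimpleGraph V) (t : V → ℕ) (r : ℕ) :
    SimpleGraph (V ⊕ ((Σ v : V, Fin (t v)) × Fin r)) where
  Adj x y :=
    match x, y with
    | Sum.inl u, Sum.inl v => G.Adj u v
    | Sum.inl u, Sum.inr (p, j) => p.1 = u ∧ j.val = 0
    | Sum.inr (p, j), Sum.inl u => p.1 = u ∧ j.val = 0
    | Sum.inr (p, j), Sum.inr (q, j') => p = q ∧ j ≠ j'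
  symm := by
    constructor
    rintro (u | ⟨p, j⟩) (v | ⟨q, j'⟩) h
    · exact G.adj_symm h
    · exact h
    · exact h
    · exact ⟨h.1.symm, h.2.symm⟩
  loopless := by
    constructor
    rintro (u | ⟨p, j⟩) h
    · exact G.loopless.irrefl u h
    · exact h.2 rfl

-- adjacency simp lemmas
lemma tpAdj_ll {G : SimpleGraph V} {t : V → ℕ} {r : ℕ} {u v : V} :
    (thornPath G t r).Adj (Sum.inl u) (Sum.inl v) ↔ G.Adj u v := Iff.rfl
lemma tpAdj_lr {G : SimpleGraph V} {t : V → ℕ} {r : ℕ} {u : V}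
    {p : Σ v : V, Fin (t v)} {j : Fin (r-1)} :
    (thornPath G t r).Adj (Sum.inl u) (Sum.inr (p, j)) ↔ p.1 = u ∧ (j : ℕ) = 0 := Iff.rfl
lemma tpAdj_rl {G : SimpleGraph V} {t : V → ℕ} {r : ℕ} {u : V}
    {p : Σ v : V, Fin (t v)} {j : Fin (r-1)} :
    (thornPath G t r).Adj (Sum.inr (p, j)) (Sum.inl u) ↔ p.1 = u ∧ (j : ℕ) = 0 := Iff.rfl
lemma tpAdj_rr {G : SimpleGraph V} {t : V → ℕ} {r : ℕ}
    {p q : Σ v : V, Fin (t v)} {j j' : Fin (r-1)} :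
    (thornPath G t r).Adj (Sum.inr (p, j)) (Sum.inr (q, j')) ↔
      p = q ∧ ((j : ℕ) + 1 = (j' : ℕ) ∨ (j' : ℕ) + 1 = (j : ℕ)) := Iff.rfl

lemma tp_edgeFS_eq [Fintype V] [DecidableEq V] (G : SimpleGraph V) [DecidableRel G.Adj] :
    edgeFS G = G.edgeFinset := by
  unfold edgeFS; ext e; simp

lemma tp_deg_eq [Fintype V] [DecidableEq V] (G : SimpleGraph V) [DecidableRel G.Adj] (v : V) :
    deg G v = G.degree v := by
  unfold deg SimpleGraph.degree; congr 1; ext u; simp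

lemma tp_deg_sum [Fintype V] [DecidableEq V] (G : SimpleGraph V) [DecidableRel G.Adj] (v : V) :
    deg G v = ∑ u, if G.Adj v u then 1 else 0 := by
  rw [tp_deg_eq, SimpleGraph.degree, SimpleGraph.neighborFinset_eq_filter, Finset.card_filter]

lemma double_sum_adj [Fintype V] [DecidableEq V] (G : SimpleGraph V) [DecidableRel G.Adj]
    (f : V → V → ℤ) (hf : ∀ u v, f u v = f v u) :
    ∑ x, ∑ y, (if G.Adj x y then f x y else 0)
      = 2 * ∑ e ∈ G.edgeFinset, Sym2.lift ⟨f, hf⟩ e := by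
  have h1 : ∑ x, ∑ y, (if G.Adj x y then f x y else 0)
      = ∑ p ∈ (univ ×ˢ univ).filter (fun p : V × V => G.Adj p.1 p.2), f p.1 p.2 := by
    rw [Finset.sum_filter, Finset.sum_product]
  rw [h1, ← Finset.sum_fiberwise_of_maps_to
    (g := fun p : V × V => s(p.1, p.2)) (t := G.edgeFinset)
    (fun p hp => by
      simp only [mem_filter] at hp
      simpa [SimpleGraph.mem_edgeFinset] using hp.2)]
  rw [Finset.mul_sum]
  refine Finset.sum_congr rfl fun e he => ?_
  induction e using Sym2.ind with
  | _ a b =>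
    have hab : G.Adj a b := by simpa [SimpleGraph.mem_edgeFinset] using he
    have hne : a ≠ b := hab.ne
    have hset : ((univ ×ˢ univ).filter (fun p : V × V => G.Adj p.1 p.2)).filter
        (fun p => s(p.1, p.2) = s(a, b)) = {(a, b), (b, a)} := by
      ext ⟨x, y⟩
      simp only [mem_filter, mem_univ, mem_product, true_and, mem_insert, mem_singleton,
        Sym2.eq_iff, Prod.mk.injEq]
      constructor
      · rintro ⟨-, (⟨rfl, rfl⟩ | ⟨rfl, rfl⟩)⟩
        · left; exact ⟨rfl, rfl⟩
        · right; exact ⟨rfl, rfl⟩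
      · rintro (⟨rfl, rfl⟩ | ⟨rfl, rfl⟩)
        · exact ⟨hab, Or.inl ⟨rfl, rfl⟩⟩
        · exact ⟨hab.symm, Or.inr ⟨rfl, rfl⟩⟩
    rw [hset, Finset.sum_pair (by simp [hne, hne.symm])]
    simp only [Sym2.lift_mk]
    rw [hf b a]; ring

lemma tp_two_hm [Fintype V] [DecidableEq V] (G : SimpleGraph V) [DecidableRel G.Adj] :
    2 * (hm G : ℤ)
      = ∑ x, ∑ y, (if G.Adj x y then ((deg G x : ℤ) + deg G y) ^ 2 else 0) := by
  rw [double_sum_adj G (fun u v => ((deg G u : ℤ) + deg G v) ^ 2) (fun u v => by ring)]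
  congr 1
  unfold hm
  rw [tp_edgeFS_eq, Nat.cast_sum]
  refine Finset.sum_congr rfl fun e _ => ?_
  induction e using Sym2.ind with
  | _ a b => simp only [Sym2.lift_mk]; push_cast; ring

lemma tp_two_edgeSum [Fintype V] [DecidableEq V] (G : SimpleGraph V) [DecidableRel G.Adj]
    (f : V → V → ℤ) (hf : ∀ u v, f u v = f v u) :
    2 * edgeSum G f hf = ∑ x, ∑ y, (if G.Adj x y then f x y else 0) := by
  rw [double_sum_adj G f hf]
  unfold edgeSum
  rw [tp_edgeFS_eq]

lemma tp_sum_ite_or {M : Type*} [AddCommMonoid M] (n a : ℕ) (f : ℕ → M) :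
    ∑ k ∈ range n, (if a + 1 = k ∨ k + 1 = a then f k else 0)
      = (if a + 1 < n then f (a + 1) else 0)
        + (if 1 ≤ a ∧ a - 1 < n then f (a - 1) else 0) := by
  have hsplit : ∀ k, (if a + 1 = k ∨ k + 1 = a then f k else 0)
      = (if k = a + 1 then f k else 0) + (if 1 ≤ a ∧ k = a - 1 then f k else 0) := by
    intro k
    by_cases h1 : k = a + 1 <;> by_cases h2 : 1 ≤ a ∧ k = a - 1
    · omega
    · rw [if_pos (by omega : a + 1 = k ∨ k + 1 = a), if_pos h1, if_neg h2, add_zero]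
    · rw [if_pos (by omega : a + 1 = k ∨ k + 1 = a), if_neg h1, if_pos h2, zero_add]
    · rw [if_neg (by omega : ¬(a + 1 = k ∨ k + 1 = a)), if_neg h1, if_neg h2, add_zero]
  rw [Finset.sum_congr rfl fun k _ => hsplit k, Finset.sum_add_distrib]
  congr 1
  · rw [Finset.sum_ite_eq' (range n) (a + 1) f]
    simp only [mem_range]
  · by_cases ha : 1 ≤ a
    · have hc : ∀ k, (if 1 ≤ a ∧ k = a - 1 then f k else 0) = (if k = a - 1 then f k else 0) :=
        fun k => by simp [ha]
      rw [Finset.sum_congr rfl fun k _ => hc k, Finset.sum_ite_eq' (range n) (a - 1) f]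
      simp only [mem_range]
      simp [ha]
    · simp [ha]

lemma tp_count1 {M : Type*} [AddCommMonoid M] [Fintype V] [DecidableEq V]
    (t : V → ℕ) (n : ℕ) (hn : 0 < n) (v : V) (C : M) :
    ∑ b : (Σ w : V, Fin (t w)) × Fin n, (if (b.1).1 = v ∧ ((b.2 : ℕ) = 0) then C else 0)
      = t v • C := by
  rw [Fintype.sum_prod_type]
  have inner : ∀ p : Σ w : V, Fin (t w),
      ∑ j : Fin n, (if p.1 = v ∧ ((j : ℕ) = 0) then C else 0) = if p.1 = v then C else 0 := by
    intro p
    by_cases hp : p.1 = v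
    · simp only [hp, true_and, if_true]
      rw [Fin.sum_univ_eq_sum_range (fun k => if k = 0 then C else 0) n,
        Finset.sum_ite_eq' (range n) 0 (fun _ => C)]
      simp only [mem_range]
      simp [hn]
    · simp [hp]
  rw [Finset.sum_congr rfl fun p _ => inner p, ← Finset.univ_sigma_univ, Finset.sum_sigma]
  have inner2 : ∀ w : V, ∑ _i : Fin (t w), (if w = v then C else 0)
      = (if w = v then t w • C else 0) := by
    intro w; split_ifs <;> simp
  rw [Finset.sum_congr rfl fun w _ => inner2 w,
    Finset.sum_ite_eq' univ v (fun w => t w • C)]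
  simp

lemma tp_count2 {M : Type*} [AddCommMonoid M] [Fintype V] [DecidableEq V]
    (t : V → ℕ) (n : ℕ) (hn : 0 < n) (g : V → M) :
    ∑ b : (Σ w : V, Fin (t w)) × Fin n, (if ((b.2 : ℕ) = 0) then g (b.1).1 else 0)
      = ∑ w, t w • g w := by
  rw [Fintype.sum_prod_type]
  have inner : ∀ p : Σ w : V, Fin (t w),
      ∑ j : Fin n, (if ((j : ℕ) = 0) then g p.1 else 0) = g p.1 := by
    intro p
    rw [Fin.sum_univ_eq_sum_range (fun k => if k = 0 then g p.1 else 0) n,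
      Finset.sum_ite_eq' (range n) 0 (fun _ => g p.1)]
    simp only [mem_range]
    simp [hn]
  rw [Finset.sum_congr rfl fun p _ => inner p, ← Finset.univ_sigma_univ, Finset.sum_sigma]
  exact Finset.sum_congr rfl fun w _ => by simp

lemma tp_deg_inl [Fintype V] [DecidableEq V] (G : SimpleGraph V) [DecidableRel G.Adj]
    (t : V → ℕ) (r : ℕ) (hr : 3 ≤ r) (v : V) :
    deg (thornPath G t r) (Sum.inl v) = deg G v + t v := by
  classical
  rw [tp_deg_sum, Fintype.sum_sum_type]
  have h1 : (∑ u : V, if (thornPath G t r).Adj (Sum.inl v) (Sum.inl u) then 1 else 0)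
      = deg G v := by
    rw [tp_deg_sum G v]
    exact Finset.sum_congr rfl fun u _ => by simp [tpAdj_ll]
  have h2 : (∑ b : (Σ w : V, Fin (t w)) × Fin (r - 1),
      if (thornPath G t r).Adj (Sum.inl v) (Sum.inr b) then 1 else 0) = t v := by
    have hb : ∀ b : (Σ w : V, Fin (t w)) × Fin (r - 1),
        (if (thornPath G t r).Adj (Sum.inl v) (Sum.inr b) then 1 else 0)
          = (if (b.1).1 = v ∧ ((b.2 : ℕ) = 0) then 1 else 0) := by
      rintro ⟨p, j⟩; simp [tpAdj_lr]
    rw [Finset.sum_congr rfl fun b _ => hb b, tp_count1 t (r - 1) (by omega) v 1, smul_eq_mul,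
      mul_one]
  rw [h1, h2]

lemma tp_deg_inr [Fintype V] [DecidableEq V] (G : SimpleGraph V) [DecidableRel G.Adj]
    (t : V → ℕ) (r : ℕ) (hr : 3 ≤ r) (p : Σ w : V, Fin (t w)) (j : Fin (r - 1)) :
    deg (thornPath G t r) (Sum.inr (p, j)) = if (j : ℕ) = r - 2 then 1 else 2 := by
  classical
  rw [tp_deg_sum, Fintype.sum_sum_type]
  have h1 : (∑ u : V, if (thornPath G t r).Adj (Sum.inr (p, j)) (Sum.inl u) then 1 else 0)
      = if (j : ℕ) = 0 then 1 else 0 := by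
    have hu : ∀ u : V, (if (thornPath G t r).Adj (Sum.inr (p, j)) (Sum.inl u) then 1 else 0)
        = (if p.1 = u then (if (j : ℕ) = 0 then 1 else 0) else 0) := by
      intro u
      rw [show ((thornPath G t r).Adj (Sum.inr (p, j)) (Sum.inl u))
        = (p.1 = u ∧ (j : ℕ) = 0) from rfl]
      by_cases h : p.1 = u <;> simp [h]
    rw [Finset.sum_congr rfl fun u _ => hu u,
      Finset.sum_ite_eq univ p.1 (fun _ => if (j : ℕ) = 0 then 1 else 0)]
    simp
  have h2 : (∑ b : (Σ w : V, Fin (t w)) × Fin (r - 1),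
      if (thornPath G t r).Adj (Sum.inr (p, j)) (Sum.inr b) then 1 else 0)
      = (if (j : ℕ) + 1 < r - 1 then 1 else 0)
        + (if 1 ≤ (j : ℕ) ∧ (j : ℕ) - 1 < r - 1 then 1 else 0) := by
    rw [Fintype.sum_prod_type]
    have inner : ∀ q : Σ w : V, Fin (t w),
        (∑ j' : Fin (r - 1),
          if (thornPath G t r).Adj (Sum.inr (p, j)) (Sum.inr (q, j')) then 1 else 0)
        = if p = q then (∑ j' : Fin (r - 1),
            if (j : ℕ) + 1 = (j' : ℕ) ∨ (j' : ℕ) + 1 = (j : ℕ) then 1 else 0) else 0 := by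
      intro q
      by_cases hq : p = q
      · rw [if_pos hq]
        refine Finset.sum_congr rfl fun j' _ => ?_
        rw [show ((thornPath G t r).Adj (Sum.inr (p, j)) (Sum.inr (q, j')))
          = (p = q ∧ ((j : ℕ) + 1 = (j' : ℕ) ∨ (j' : ℕ) + 1 = (j : ℕ))) from rfl]
        simp [hq]
      · rw [if_neg hq]
        refine Finset.sum_eq_zero fun j' _ => ?_
        rw [show ((thornPath G t r).Adj (Sum.inr (p, j)) (Sum.inr (q, j')))
          = (p = q ∧ ((j : ℕ) + 1 = (j' : ℕ) ∨ (j' : ℕ) + 1 = (j : ℕ))) from rfl]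
        simp [hq]
    rw [Finset.sum_congr rfl fun q _ => inner q, Finset.sum_ite_eq univ p _]
    simp only [mem_univ, if_true]
    rw [Fin.sum_univ_eq_sum_range
      (fun k => if (j : ℕ) + 1 = k ∨ k + 1 = (j : ℕ) then 1 else 0) (r - 1)]
    exact tp_sum_ite_or (r - 1) (j : ℕ) (fun _ => 1)
  rw [h1, h2]
  have hj := j.isLt
  split_ifs <;> omega

lemma tp_T (r : ℕ) (hr : 3 ≤ r) :
    ∑ j ∈ range (r - 1), ∑ k ∈ range (r - 1),
      (if j + 1 = k ∨ k + 1 = j then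
        ((if j = r - 2 then (1 : ℤ) else 2) + (if k = r - 2 then (1 : ℤ) else 2)) ^ 2 else 0)
      = 32 * (r : ℤ) - 78 := by
  have hstep : ∀ j ∈ range (r - 1),
      (∑ k ∈ range (r - 1),
        (if j + 1 = k ∨ k + 1 = j then
          ((if j = r - 2 then (1 : ℤ) else 2) + (if k = r - 2 then (1 : ℤ) else 2)) ^ 2 else 0))
      = (if j < r - 2 then (16 : ℤ) else 0) + (if j = r - 3 then (-7 : ℤ) else 0)
        + (if 1 ≤ j then (16 : ℤ) else 0) + (if j = r - 2 then (-7 : ℤ) else 0) := by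
    intro j hj
    rw [mem_range] at hj
    rw [tp_sum_ite_or (r - 1) j
      (fun k => ((if j = r - 2 then (1 : ℤ) else 2) + (if k = r - 2 then (1 : ℤ) else 2)) ^ 2)]
    split_ifs <;> norm_num <;> omega
  rw [Finset.sum_congr rfl hstep]
  have c1 : ∑ j ∈ range (r - 1), (if j < r - 2 then (16 : ℤ) else 0) = 16 * ((r : ℤ) - 2) := by
    rw [← Finset.sum_filter]
    have hf : filter (· < r - 2) (range (r - 1)) = range (r - 2) := by
      ext x; simp only [mem_filter, mem_range]; omega
    rw [hf, Finset.sum_const, card_range, nsmul_eq_mul]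
    have : ((r - 2 : ℕ) : ℤ) = (r : ℤ) - 2 := by omega
    rw [this]; ring
  have c2 : ∑ j ∈ range (r - 1), (if j = r - 3 then (-7 : ℤ) else 0) = -7 := by
    rw [Finset.sum_ite_eq' (range (r - 1)) (r - 3) (fun _ => (-7 : ℤ))]
    simp only [mem_range]
    rw [if_pos (by omega)]
  have c3 : ∑ j ∈ range (r - 1), (if 1 ≤ j then (16 : ℤ) else 0) = 16 * ((r : ℤ) - 2) := by
    rw [← Finset.sum_filter]
    have hf : filter (1 ≤ ·) (range (r - 1)) = Finset.Ico 1 (r - 1) := by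
      ext x; simp only [mem_filter, mem_range, Finset.mem_Ico]; omega
    rw [hf, Finset.sum_const, Nat.card_Ico, nsmul_eq_mul]
    have : ((r - 1 - 1 : ℕ) : ℤ) = (r : ℤ) - 2 := by omega
    rw [this]; ring
  have c4 : ∑ j ∈ range (r - 1), (if j = r - 2 then (-7 : ℤ) else 0) = -7 := by
    rw [Finset.sum_ite_eq' (range (r - 1)) (r - 2) (fun _ => (-7 : ℤ))]
    simp only [mem_range]
    rw [if_pos (by omega)]
  simp only [Finset.sum_add_distrib]
  rw [c1, c2, c3, c4]; ring

theorem hyperZagreb_thornPath {V : Type*} [Fintype V] (G : SimpleGraph V)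
    (t : V → ℕ) (r : ℕ) (hr : 3 ≤ r) :
    (hm (thornPath G t r) : ℤ) =
      hm G
      + 2 * edgeSum G (fun u v => ((deg G u : ℤ) + deg G v) * ((t u : ℤ) + t v))
      (by intro u v; ring)
      + edgeSum G (fun u v => ((t u : ℤ) + t v) ^ 2)
      (by intro u v; ring)
      + (16 * (r : ℤ) - 35) * ∑ i : V, (t i : ℤ)
      + ∑ i : V, ((t i : ℤ) * (deg G i : ℤ) ^ 2 + (t i : ℤ) ^ 3 + 4 * (t i : ℤ) ^ 2
          + 2 * (t i : ℤ) ^ 2 * (deg G i : ℤ) + 4 * (t i : ℤ) * (deg G i : ℤ)) := by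
  classical
  apply mul_left_cancel₀ (two_ne_zero (α := ℤ))
  set A := thornPath G t r with hA
  -- degree facts, as ℤ
  have dI : ∀ v : V, ((deg A (Sum.inl v) : ℕ) : ℤ) = (deg G v : ℤ) + t v := by
    intro v; rw [hA, tp_deg_inl G t r hr v]; push_cast; ring
  have dR : ∀ (p : Σ w : V, Fin (t w)) (j : Fin (r - 1)),
      ((deg A (Sum.inr (p, j)) : ℕ) : ℤ) = if (j : ℕ) = r - 2 then 1 else 2 := by
    intro p j; rw [hA, tp_deg_inr G t r hr p j]
    split_ifs <;> simp
  -- row computations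
  have hrow1 : ∀ u : V,
      (∑ y : V ⊕ ((Σ w : V, Fin (t w)) × Fin (r - 1)),
        if A.Adj (Sum.inl u) y then ((deg A (Sum.inl u) : ℤ) + deg A y) ^ 2 else 0)
      = (∑ v : V, if G.Adj u v then
            (((deg G u : ℤ) + t u) + ((deg G v : ℤ) + t v)) ^ 2 else 0)
        + (t u : ℤ) * (((deg G u : ℤ) + t u) + 2) ^ 2 := by
    intro u
    rw [Fintype.sum_sum_type]
    congr 1
    · refine Finset.sum_congr rfl fun v _ => ?_
      by_cases h : G.Adj u v
      · rw [if_pos (show A.Adj (Sum.inl u) (Sum.inl v) from h), if_pos h, dI u, dI v]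
      · rw [if_neg (show ¬ A.Adj (Sum.inl u) (Sum.inl v) from fun h' => h h'), if_neg h]
    · have hb : ∀ b : (Σ w : V, Fin (t w)) × Fin (r - 1),
          (if A.Adj (Sum.inl u) (Sum.inr b) then
            ((deg A (Sum.inl u) : ℤ) + deg A (Sum.inr b)) ^ 2 else 0)
          = (if (b.1).1 = u ∧ ((b.2 : ℕ) = 0) then
              (((deg G u : ℤ) + t u) + 2) ^ 2 else 0) := by
        rintro ⟨p, j⟩
        by_cases h : p.1 = u ∧ (j : ℕ) = 0
        · rw [if_pos (show A.Adj (Sum.inl u) (Sum.inr (p, j)) from h), if_pos h, dI u,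
            dR p j, if_neg (show ¬((j : ℕ) = r - 2) by omega)]
        · rw [if_neg (show ¬ A.Adj (Sum.inl u) (Sum.inr (p, j)) from fun h' => h h'), if_neg h]
      rw [Finset.sum_congr rfl fun b _ => hb b,
        tp_count1 t (r - 1) (by omega) u ((((deg G u : ℤ) + t u) + 2) ^ 2), nsmul_eq_mul]
  have hrow2 : ∀ (p : Σ w : V, Fin (t w)) (j : Fin (r - 1)),
      (∑ y : V ⊕ ((Σ w : V, Fin (t w)) × Fin (r - 1)),
        if A.Adj (Sum.inr (p, j)) y then ((deg A (Sum.inr (p, j)) : ℤ) + deg A y) ^ 2 else 0)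
      = (if (j : ℕ) = 0 then (((deg G p.1 : ℤ) + t p.1) + 2) ^ 2 else 0)
        + ∑ j' ∈ range (r - 1),
            (if (j : ℕ) + 1 = j' ∨ j' + 1 = (j : ℕ) then
              ((if (j : ℕ) = r - 2 then (1 : ℤ) else 2)
                + (if j' = r - 2 then (1 : ℤ) else 2)) ^ 2 else 0) := by
    intro p j
    rw [Fintype.sum_sum_type]
    congr 1
    · have hu : ∀ u : V,
          (if A.Adj (Sum.inr (p, j)) (Sum.inl u) then
            ((deg A (Sum.inr (p, j)) : ℤ) + deg A (Sum.inl u)) ^ 2 else 0)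
          = (if p.1 = u then (if (j : ℕ) = 0 then (((deg G u : ℤ) + t u) + 2) ^ 2 else 0)
              else 0) := by
        intro u
        by_cases h : p.1 = u ∧ (j : ℕ) = 0
        · rw [if_pos (show A.Adj (Sum.inr (p, j)) (Sum.inl u) from h), if_pos h.1, if_pos h.2,
            dI u, dR p j, if_neg (show ¬((j : ℕ) = r - 2) by omega)]
          ring
        · rw [if_neg (show ¬ A.Adj (Sum.inr (p, j)) (Sum.inl u) from fun h' => h h')]
          by_cases h1 : p.1 = u
          · rw [if_pos h1, if_neg (fun h2 => h ⟨h1, h2⟩)]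
          · rw [if_neg h1]
      rw [Finset.sum_congr rfl fun u _ => hu u,
        Finset.sum_ite_eq univ p.1
          (fun u => if (j : ℕ) = 0 then (((deg G u : ℤ) + t u) + 2) ^ 2 else 0)]
      simp only [mem_univ, if_true]
    · rw [Fintype.sum_prod_type]
      have inner : ∀ q : Σ w : V, Fin (t w),
          (∑ j' : Fin (r - 1),
            if A.Adj (Sum.inr (p, j)) (Sum.inr (q, j')) then
              ((deg A (Sum.inr (p, j)) : ℤ) + deg A (Sum.inr (q, j'))) ^ 2 else 0)
          = if p = q then
              (∑ j' : Fin (r - 1),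
                if (j : ℕ) + 1 = (j' : ℕ) ∨ (j' : ℕ) + 1 = (j : ℕ) then
                  ((if (j : ℕ) = r - 2 then (1 : ℤ) else 2)
                    + (if (j' : ℕ) = r - 2 then (1 : ℤ) else 2)) ^ 2 else 0) else 0 := by
        intro q
        by_cases hq : p = q
        · rw [if_pos hq]
          refine Finset.sum_congr rfl fun j' _ => ?_
          by_cases hc : (j : ℕ) + 1 = (j' : ℕ) ∨ (j' : ℕ) + 1 = (j : ℕ)
          · rw [if_pos (show A.Adj (Sum.inr (p, j)) (Sum.inr (q, j')) from ⟨hq, hc⟩),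
              if_pos hc, dR p j, dR q j']
          · rw [if_neg (show ¬ A.Adj (Sum.inr (p, j)) (Sum.inr (q, j')) from
                fun h' => hc h'.2), if_neg hc]
        · rw [if_neg hq]
          refine Finset.sum_eq_zero fun j' _ => ?_
          rw [if_neg (show ¬ A.Adj (Sum.inr (p, j)) (Sum.inr (q, j')) from
            fun h' => hq h'.1)]
      rw [Finset.sum_congr rfl fun q _ => inner q, Finset.sum_ite_eq univ p _]
      simp only [mem_univ, if_true]
      rw [Fin.sum_univ_eq_sum_range
        (fun j' => if (j : ℕ) + 1 = j' ∨ j' + 1 = (j : ℕ) then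
          ((if (j : ℕ) = r - 2 then (1 : ℤ) else 2)
            + (if j' = r - 2 then (1 : ℤ) else 2)) ^ 2 else 0) (r - 1)]
  -- assemble the big sum
  rw [tp_two_hm A, Fintype.sum_sum_type]
  have hblock1 :
      (∑ u : V, ∑ y : V ⊕ ((Σ w : V, Fin (t w)) × Fin (r - 1)),
        if A.Adj (Sum.inl u) y then ((deg A (Sum.inl u) : ℤ) + deg A y) ^ 2 else 0)
      = (∑ u : V, ∑ v : V, if G.Adj u v then
            (((deg G u : ℤ) + t u) + ((deg G v : ℤ) + t v)) ^ 2 else 0)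
        + ∑ u : V, (t u : ℤ) * (((deg G u : ℤ) + t u) + 2) ^ 2 := by
    rw [← Finset.sum_add_distrib]
    exact Finset.sum_congr rfl fun u _ => hrow1 u
  have hblock2 :
      (∑ b : (Σ w : V, Fin (t w)) × Fin (r - 1),
        ∑ y : V ⊕ ((Σ w : V, Fin (t w)) × Fin (r - 1)),
          if A.Adj (Sum.inr b) y then ((deg A (Sum.inr b) : ℤ) + deg A y) ^ 2 else 0)
      = (∑ w : V, (t w : ℤ) * (((deg G w : ℤ) + t w) + 2) ^ 2)
        + (∑ w : V, (t w : ℤ)) * (32 * (r : ℤ) - 78) := by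
    have hb : ∀ b : (Σ w : V, Fin (t w)) × Fin (r - 1),
        (∑ y : V ⊕ ((Σ w : V, Fin (t w)) × Fin (r - 1)),
          if A.Adj (Sum.inr b) y then ((deg A (Sum.inr b) : ℤ) + deg A y) ^ 2 else 0)
        = (if ((b.2 : ℕ) = 0) then (((deg G (b.1).1 : ℤ) + t (b.1).1) + 2) ^ 2 else 0)
          + ∑ j' ∈ range (r - 1),
              (if ((b.2 : ℕ)) + 1 = j' ∨ j' + 1 = ((b.2 : ℕ)) then
                ((if ((b.2 : ℕ)) = r - 2 then (1 : ℤ) else 2)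
                  + (if j' = r - 2 then (1 : ℤ) else 2)) ^ 2 else 0) := by
      rintro ⟨p, j⟩
      exact hrow2 p j
    rw [Finset.sum_congr rfl fun b _ => hb b, Finset.sum_add_distrib]
    congr 1
    · rw [tp_count2 t (r - 1) (by omega)
        (fun w => (((deg G w : ℤ) + t w) + 2) ^ 2)]
      exact Finset.sum_congr rfl fun w _ => by rw [nsmul_eq_mul]
    · rw [Fintype.sum_prod_type]
      have hTrow : ∀ (p : Σ w : V, Fin (t w)),
          (∑ j : Fin (r - 1), ∑ j' ∈ range (r - 1),
            (if ((j : ℕ)) + 1 = j' ∨ j' + 1 = ((j : ℕ)) then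
              ((if ((j : ℕ)) = r - 2 then (1 : ℤ) else 2)
                + (if j' = r - 2 then (1 : ℤ) else 2)) ^ 2 else 0))
          = 32 * (r : ℤ) - 78 := by
        intro p
        rw [Fin.sum_univ_eq_sum_range
          (fun j => ∑ j' ∈ range (r - 1),
            (if j + 1 = j' ∨ j' + 1 = j then
              ((if j = r - 2 then (1 : ℤ) else 2)
                + (if j' = r - 2 then (1 : ℤ) else 2)) ^ 2 else 0)) (r - 1)]
        exact tp_T r hr
      rw [Finset.sum_congr rfl fun p _ => hTrow p, Finset.sum_const, nsmul_eq_mul,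
        Finset.card_univ, Fintype.card_sigma]
      simp only [Fintype.card_fin]
      rw [Nat.cast_sum]
  rw [hblock1, hblock2]
  -- expand the G-edge block
  have hVV : (∑ u : V, ∑ v : V, if G.Adj u v then
        (((deg G u : ℤ) + t u) + ((deg G v : ℤ) + t v)) ^ 2 else 0)
      = 2 * (hm G : ℤ)
        + 2 * (2 * edgeSum G (fun u v => ((deg G u : ℤ) + deg G v) * ((t u : ℤ) + t v))
            (fun u v => by ring))
        + 2 * edgeSum G (fun u v => ((t u : ℤ) + t v) ^ 2) (fun u v => by ring) := by
    have hexp : ∀ u v : V,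
        (if G.Adj u v then (((deg G u : ℤ) + t u) + ((deg G v : ℤ) + t v)) ^ 2 else 0)
        = (if G.Adj u v then ((deg G u : ℤ) + deg G v) ^ 2 else 0)
          + 2 * (if G.Adj u v then ((deg G u : ℤ) + deg G v) * ((t u : ℤ) + t v) else 0)
          + (if G.Adj u v then ((t u : ℤ) + t v) ^ 2 else 0) := by
      intro u v
      by_cases h : G.Adj u v
      · simp only [if_pos h]; ring
      · simp only [if_neg h]; ring
    rw [Finset.sum_congr rfl fun u _ => Finset.sum_congr rfl fun v _ => hexp u v]
    simp only [Finset.sum_add_distrib, ← Finset.mul_sum]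
    rw [← tp_two_hm G,
      tp_two_edgeSum G (fun u v => ((deg G u : ℤ) + deg G v) * ((t u : ℤ) + t v))
        (fun u v => by ring),
      tp_two_edgeSum G (fun u v => ((t u : ℤ) + t v) ^ 2) (fun u v => by ring)]
  rw [hVV]
  have hsum1 : ∑ u : V, (t u : ℤ) * (((deg G u : ℤ) + t u) + 2) ^ 2
      = (∑ i : V, ((t i : ℤ) * (deg G i : ℤ) ^ 2 + (t i : ℤ) ^ 3 + 4 * (t i : ℤ) ^ 2
          + 2 * (t i : ℤ) ^ 2 * (deg G i : ℤ) + 4 * (t i : ℤ) * (deg G i : ℤ)))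
        + 4 * ∑ i : V, (t i : ℤ) := by
    rw [Finset.mul_sum, ← Finset.sum_add_distrib]
    exact Finset.sum_congr rfl fun i _ => by ring
  rw [hsum1]
  ring
end

section
/- Let G have vertices v_1,…,v_n, and let G_C be obtained by attaching, at each vertex v_i, t_i cycles of length r ≥ 3 (identifying v_i with one vertex of each cycle). Then HM(G_C) = HM(G) + 4 Σ_{v_i v_j ∈ E(G)} (d(v_i)+d(v_j))(t_i+t_j) + 4 Σ_{v_i v_j ∈ E(G)} (t_i+t_j)^2 + 2 Σ_i t_i d(v_i)^2 + 8 Σ_i [d(v_i) t_i^2 + d(v_i) t_i + t_i^3 + 2 t_i^2] + (16r−24) Σ_i t_i. -/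
open Finset

variable {V : Type*}

variable {V : Type*}

section HZAux

open Finset

lemma edgeFS_eq_edgeFinset {W : Type*} [Fintype W] (H : SimpleGraph W) [DecidableRel H.Adj] :
    edgeFS H = H.edgeFinset := by
  classical
  ext e
  simp [edgeFS, SimpleGraph.edgeFinset, Set.mem_toFinset]

lemma deg_eq_degree {W : Type*} [Fintype W] (H : SimpleGraph W) [DecidableRel H.Adj] (v : W) :
    deg H v = H.degree v := by
  unfold deg
  rw [SimpleGraph.degree, SimpleGraph.degree]
  congr 1
  ext w
  simp [SimpleGraph.neighborFinset, Set.mem_toFinset]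

lemma deg_as_sum {W : Type*} [Fintype W] (H : SimpleGraph W) [DecidableRel H.Adj] (v : W) :
    ((deg H v : ℤ)) = ∑ u, if H.Adj v u then (1:ℤ) else 0 := by
  rw [deg_eq_degree, SimpleGraph.degree, SimpleGraph.neighborFinset_eq_filter,
    Finset.card_filter]
  push_cast
  simp

lemma two_mul_lift_sum {W : Type*} [Fintype W] (H : SimpleGraph W) [DecidableRel H.Adj]
    (f : W → W → ℤ) (hf : ∀ u v, f u v = f v u) :
    2 * ∑ e ∈ H.edgeFinset, Sym2.lift ⟨f, hf⟩ e =
      ∑ u, ∑ v, if H.Adj u v then f u v else 0 := by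
  classical
  have hfib : ∀ e ∈ H.edgeFinset,
      ∑ d ∈ univ.filter (fun d : H.Dart => d.edge = e), Sym2.lift ⟨f, hf⟩ d.edge
        = 2 * Sym2.lift ⟨f, hf⟩ e := by
    intro e he
    rw [Finset.sum_congr rfl (fun d hd => by rw [(Finset.mem_filter.mp hd).2])]
    rw [Finset.sum_const, SimpleGraph.dart_edge_fiber_card H e (SimpleGraph.mem_edgeFinset.mp he)]
    simp [two_mul]
  calc 2 * ∑ e ∈ H.edgeFinset, Sym2.lift ⟨f, hf⟩ e
      = ∑ e ∈ H.edgeFinset, ∑ d ∈ univ.filter (fun d : H.Dart => d.edge = e),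
          Sym2.lift ⟨f, hf⟩ d.edge := by
        rw [Finset.mul_sum]; exact (Finset.sum_congr rfl hfib).symm
    _ = ∑ d : H.Dart, Sym2.lift ⟨f, hf⟩ d.edge :=
        Finset.sum_fiberwise_of_maps_to
          (fun d _ => SimpleGraph.mem_edgeFinset.mpr d.edge_mem) _
    _ = ∑ d : H.Dart, f d.toProd.1 d.toProd.2 := by
        refine Finset.sum_congr rfl fun d _ => ?_
        rw [SimpleGraph.Dart.edge, Sym2.lift_mk]
    _ = ∑ p ∈ (univ ×ˢ univ).filter (fun p : W × W => H.Adj p.1 p.2), f p.1 p.2 := by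
        refine Finset.sum_bij' (fun d _ => d.toProd) (fun p hp => ⟨p, (Finset.mem_filter.mp hp).2⟩)
          ?_ ?_ ?_ ?_ ?_ <;> simp
    _ = ∑ u, ∑ v, if H.Adj u v then f u v else 0 := by
        rw [Finset.sum_filter, Finset.sum_product]

lemma two_mul_edgeSum {W : Type*} [Fintype W] (H : SimpleGraph W) [DecidableRel H.Adj]
    (f : W → W → ℤ) (hf : ∀ u v, f u v = f v u) :
    2 * edgeSum H f hf = ∑ u, ∑ v, if H.Adj u v then f u v else 0 := by
  rw [edgeSum, edgeFS_eq_edgeFinset, two_mul_lift_sum]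

lemma cast_hm {W : Type*} [Fintype W] (H : SimpleGraph W) :
    (hm H : ℤ) = edgeSum H (fun u v => ((deg H u : ℤ) + deg H v) ^ 2)
      (fun u v => by ring) := by
  rw [hm, edgeSum]
  push_cast
  refine Finset.sum_congr rfl fun e _ => ?_
  induction e with
  | h a b => rw [Sym2.lift_mk, Sym2.lift_mk]; push_cast; ring

lemma sum_range_ind2 (n a b : ℕ) (ha : a < n) (hb : b < n) (hab : a ≠ b) :
    ∑ k ∈ Finset.range n, (if (k = a ∨ k = b) then (1:ℤ) else 0) = 2 := by
  have h : ∀ k, (if (k = a ∨ k = b) then (1:ℤ) else 0)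
      = (if k = a then 1 else 0) + (if k = b then 1 else 0) := by
    intro k; split_ifs <;> omega
  rw [Finset.sum_congr rfl (fun k _ => h k), Finset.sum_add_distrib,
    Finset.sum_ite_eq' _ a (fun _ => (1:ℤ)), Finset.sum_ite_eq' _ b (fun _ => (1:ℤ))]
  simp [Finset.mem_range, ha, hb]

lemma fin_sum_ends (r : ℕ) (hr : 3 ≤ r) (C : ℤ) :
    ∑ j : Fin (r-1), (if (j.val = 0 ∨ j.val = r-2) then C else 0) = 2 * C := by
  have h : ∀ j : Fin (r-1), (if (j.val = 0 ∨ j.val = r-2) then C else 0)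
      = (if (j.val = 0 ∨ j.val = r-2) then (1:ℤ) else 0) * C := by
    intro j; split_ifs <;> ring
  rw [Finset.sum_congr rfl (fun j _ => h j), ← Finset.sum_mul]
  rw [Fin.sum_univ_eq_sum_range (fun k => if (k = 0 ∨ k = r-2) then (1:ℤ) else 0)]
  rw [sum_range_ind2 (r-1) 0 (r-2) (by omega) (by omega) (by omega)]

lemma fin_nbr_count (r : ℕ) (hr : 3 ≤ r) (j : Fin (r-1)) :
    (if (j.val = 0 ∨ j.val = r-2) then (1:ℤ) else 0)
      + ∑ k : Fin (r-1), (if (j.val + 1 = k.val ∨ k.val + 1 = j.val) then (1:ℤ) else 0) = 2 := by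
  have hj := j.isLt
  rw [Fin.sum_univ_eq_sum_range (fun k => if (j.val + 1 = k ∨ k + 1 = j.val) then (1:ℤ) else 0)]
  have h : ∀ k, (if (j.val + 1 = k ∨ k + 1 = j.val) then (1:ℤ) else 0)
      = (if k = j.val + 1 then 1 else 0)
        + (if k = j.val - 1 then (if 1 ≤ j.val then (1:ℤ) else 0) else 0) := by
    intro k; split_ifs <;> omega
  rw [Finset.sum_congr rfl (fun k _ => h k), Finset.sum_add_distrib,
    Finset.sum_ite_eq' _ (j.val+1) (fun _ => (1:ℤ)),
    Finset.sum_ite_eq' _ (j.val-1) (fun _ => (if 1 ≤ j.val then (1:ℤ) else 0))]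
  simp only [Finset.mem_range]
  split_ifs <;> omega

lemma sigma_pair_sum {V : Type*} [Fintype V] [DecidableEq V] (t : V → ℕ) (n : ℕ) (v : V)
    (c : Fin n → Prop) [DecidablePred c] (C S : ℤ)
    (hS : ∑ j : Fin n, (if c j then C else 0) = S) :
    ∑ w : (Σ a : V, Fin (t a)) × Fin n, (if w.1.1 = v ∧ c w.2 then C else 0)
      = (t v : ℤ) * S := by
  rw [Fintype.sum_prod_type]
  have h1 : ∀ p : Σ a : V, Fin (t a), ∑ j, (if p.1 = v ∧ c j then C else 0)
      = if p.1 = v then S else 0 := by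
    intro p
    by_cases h : p.1 = v
    · simp only [h, true_and, if_pos]; exact hS
    · simp [h]
  rw [Finset.sum_congr rfl (fun p _ => h1 p), ← Finset.univ_sigma_univ, Finset.sum_sigma]
  have h2 : ∀ a : V, ∑ _i : Fin (t a), (if a = v then S else 0)
      = if a = v then (t a : ℤ) * S else 0 := by
    intro a
    rw [Finset.sum_const, Finset.card_univ, Fintype.card_fin, nsmul_eq_mul]
    split_ifs <;> ring
  rw [Finset.sum_congr rfl (fun a _ => h2 a), Finset.sum_ite_eq' _ v (fun a => (t a : ℤ) * S)]
  simp

lemma thornCycle_adj_inl_inl {V : Type*} {G : SimpleGraph V} {t : V → ℕ} {r : ℕ} {u v : V} :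
    (thornCycle G t r).Adj (Sum.inl u) (Sum.inl v) ↔ G.Adj u v := Iff.rfl

lemma thornCycle_adj_inl_inr {V : Type*} {G : SimpleGraph V} {t : V → ℕ} {r : ℕ} {u : V}
    {p : Σ v : V, Fin (t v)} {j : Fin (r-1)} :
    (thornCycle G t r).Adj (Sum.inl u) (Sum.inr (p, j))
      ↔ (p.1 = u ∧ (j.val = 0 ∨ j.val = r - 2)) := Iff.rfl

lemma thornCycle_adj_inr_inl {V : Type*} {G : SimpleGraph V} {t : V → ℕ} {r : ℕ} {u : V}
    {p : Σ v : V, Fin (t v)} {j : Fin (r-1)} :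
    (thornCycle G t r).Adj (Sum.inr (p, j)) (Sum.inl u)
      ↔ (p.1 = u ∧ (j.val = 0 ∨ j.val = r - 2)) := Iff.rfl

lemma thornCycle_adj_inr_inr {V : Type*} {G : SimpleGraph V} {t : V → ℕ} {r : ℕ}
    {p q : Σ v : V, Fin (t v)} {j j' : Fin (r-1)} :
    (thornCycle G t r).Adj (Sum.inr (p, j)) (Sum.inr (q, j'))
      ↔ (p = q ∧ (j.val + 1 = j'.val ∨ j'.val + 1 = j.val)) := Iff.rfl

lemma deg_thornCycle_inl {V : Type*} [Fintype V] (G : SimpleGraph V) (t : V → ℕ) (r : ℕ)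
    (hr : 3 ≤ r) (v : V) :
    (deg (thornCycle G t r) (Sum.inl v) : ℤ) = (deg G v : ℤ) + 2 * t v := by
  classical
  letI : DecidableRel G.Adj := Classical.decRel _
  letI : DecidableRel (thornCycle G t r).Adj := Classical.decRel _
  rw [deg_as_sum, deg_as_sum, Fintype.sum_sum_type]
  have e0 : ∑ u : V, (if (thornCycle G t r).Adj (Sum.inl v) (Sum.inl u) then (1:ℤ) else 0)
      = ∑ u : V, (if G.Adj v u then (1:ℤ) else 0) :=
    Finset.sum_congr rfl fun u _ => if_congr thornCycle_adj_inl_inl rfl rfl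
  have e1 : ∑ w : (Σ a : V, Fin (t a)) × Fin (r-1),
        (if (thornCycle G t r).Adj (Sum.inl v) (Sum.inr w) then (1:ℤ) else 0)
      = ∑ w : (Σ a : V, Fin (t a)) × Fin (r-1),
        (if w.1.1 = v ∧ (w.2.val = 0 ∨ w.2.val = r - 2) then (1:ℤ) else 0) :=
      Finset.sum_congr rfl fun w _ => by
        rcases w with ⟨p, j⟩
        exact if_congr thornCycle_adj_inl_inr rfl rfl
  rw [e0, e1, sigma_pair_sum t (r-1) v _ 1 2 (fin_sum_ends r hr 1)]
  ring

lemma deg_thornCycle_inr {V : Type*} [Fintype V] (G : SimpleGraph V) (t : V → ℕ) (r : ℕ)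
    (hr : 3 ≤ r) (p : Σ v : V, Fin (t v)) (j : Fin (r-1)) :
    (deg (thornCycle G t r) (Sum.inr (p, j)) : ℤ) = 2 := by
  classical
  letI : DecidableRel (thornCycle G t r).Adj := Classical.decRel _
  rw [deg_as_sum, Fintype.sum_sum_type]
  have h1 : ∑ u : V, (if (thornCycle G t r).Adj (Sum.inr (p, j)) (Sum.inl u) then (1:ℤ) else 0)
      = if (j.val = 0 ∨ j.val = r - 2) then (1:ℤ) else 0 := by
    have e : ∀ u : V, (if (thornCycle G t r).Adj (Sum.inr (p, j)) (Sum.inl u) then (1:ℤ) else 0)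
        = if u = p.1 then (if (j.val = 0 ∨ j.val = r - 2) then (1:ℤ) else 0) else 0 := by
      intro u
      rw [if_congr thornCycle_adj_inr_inl rfl rfl]
      by_cases hu : u = p.1
      · subst hu; simp
      · rw [if_neg (fun h => hu h.1.symm), if_neg hu]
    rw [Finset.sum_congr rfl (fun u _ => e u),
      Finset.sum_ite_eq' _ p.1 (fun _ => (if (j.val = 0 ∨ j.val = r - 2) then (1:ℤ) else 0))]
    simp
  have h2 : ∑ w : (Σ a : V, Fin (t a)) × Fin (r-1),
      (if (thornCycle G t r).Adj (Sum.inr (p, j)) (Sum.inr w) then (1:ℤ) else 0)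
      = ∑ k : Fin (r-1), (if (j.val + 1 = k.val ∨ k.val + 1 = j.val) then (1:ℤ) else 0) := by
    rw [Fintype.sum_prod_type]
    have e : ∀ (q : Σ a : V, Fin (t a)) (k : Fin (r-1)),
        (if (thornCycle G t r).Adj (Sum.inr (p, j)) (Sum.inr (q, k)) then (1:ℤ) else 0)
        = if q = p then (if (j.val + 1 = k.val ∨ k.val + 1 = j.val) then (1:ℤ) else 0) else 0 := by
      intro q k
      rw [if_congr thornCycle_adj_inr_inr rfl rfl]
      by_cases hq : q = p
      · subst hq; simp
      · rw [if_neg (fun h => hq h.1.symm), if_neg hq]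
    rw [Finset.sum_congr rfl (fun q _ => Finset.sum_congr rfl (fun k _ => e q k)),
      Finset.sum_comm]
    refine Finset.sum_congr rfl fun k _ => ?_
    rw [Finset.sum_ite_eq' _ p
      (fun _ => (if (j.val + 1 = k.val ∨ k.val + 1 = j.val) then (1:ℤ) else 0))]
    simp
  rw [h1, h2]
  exact fin_nbr_count r hr j

lemma sigma_const_sum {V : Type*} [Fintype V] (t : V → ℕ) (F : V → ℤ) :
    ∑ p : Σ a : V, Fin (t a), F p.1 = ∑ a : V, (t a : ℤ) * F a := by
  rw [← Finset.univ_sigma_univ, Finset.sum_sigma]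
  refine Finset.sum_congr rfl fun a _ => ?_
  calc ∑ s : Fin (t a), F (⟨a, s⟩ : Σ a : V, Fin (t a)).1
      = ∑ _s : Fin (t a), F a := rfl
    _ = (t a : ℤ) * F a := by
        rw [Finset.sum_const, Finset.card_univ, Fintype.card_fin, nsmul_eq_mul]

end HZAux

theorem hyperZagreb_thornCycle {V : Type*} [Fintype V] (G : SimpleGraph V)
    (t : V → ℕ) (r : ℕ) (hr : 3 ≤ r) :
    (hm (thornCycle G t r) : ℤ) =
      hm G
      + 4 * edgeSum G (fun u v => ((deg G u : ℤ) + deg G v) * ((t u : ℤ) + t v))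
      (by intro u v; ring)
      + 4 * edgeSum G (fun u v => ((t u : ℤ) + t v) ^ 2)
      (by intro u v; ring)
      + 2 * ∑ i : V, (t i : ℤ) * (deg G i : ℤ) ^ 2
      + 8 * ∑ i : V, ((deg G i : ℤ) * (t i : ℤ) ^ 2 + (deg G i : ℤ) * (t i : ℤ)
          + (t i : ℤ) ^ 3 + 2 * (t i : ℤ) ^ 2)
      + (16 * (r : ℤ) - 24) * ∑ i : V, (t i : ℤ) := by
  classical
  letI : DecidableRel G.Adj := Classical.decRel _
  letI : DecidableRel (thornCycle G t r).Adj := Classical.decRel _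
  have hr1 : ((r - 1 : ℕ) : ℤ) = (r : ℤ) - 1 := by
    have h1 : (1:ℕ) ≤ r := by omega
    push_cast [h1]
    ring
  refine mul_left_cancel₀ (a := (2:ℤ)) (by norm_num) ?_
  rw [cast_hm, two_mul_edgeSum]
  simp only [Fintype.sum_sum_type]
  simp only [thornCycle_adj_inl_inl, thornCycle_adj_inl_inr, thornCycle_adj_inr_inl,
    thornCycle_adj_inr_inr, deg_thornCycle_inl G t r hr, deg_thornCycle_inr G t r hr]
  rw [Finset.sum_add_distrib, Finset.sum_add_distrib]
  -- Piece A
  have hA : (∑ u : V, ∑ v : V, if G.Adj u v then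
        ((deg G u : ℤ) + 2 * ↑(t u) + (↑(deg G v) + 2 * ↑(t v))) ^ 2 else 0)
      = (∑ u : V, ∑ v : V, if G.Adj u v then ((deg G u : ℤ) + ↑(deg G v)) ^ 2 else 0)
        + 4 * (∑ u : V, ∑ v : V, if G.Adj u v then
            ((deg G u : ℤ) + ↑(deg G v)) * ((t u : ℤ) + ↑(t v)) else 0)
        + 4 * (∑ u : V, ∑ v : V, if G.Adj u v then ((t u : ℤ) + ↑(t v)) ^ 2 else 0) := by
    rw [Finset.mul_sum, Finset.mul_sum, ← Finset.sum_add_distrib, ← Finset.sum_add_distrib]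
    refine Finset.sum_congr rfl fun u _ => ?_
    rw [Finset.mul_sum, Finset.mul_sum, ← Finset.sum_add_distrib, ← Finset.sum_add_distrib]
    refine Finset.sum_congr rfl fun v _ => ?_
    split_ifs <;> ring
  -- Piece B
  have hB : (∑ u : V, ∑ w : ((v : V) × Fin (t v)) × Fin (r - 1),
        if (thornCycle G t r).Adj (Sum.inl u) (Sum.inr w) then
          ((deg G u : ℤ) + 2 * ↑(t u) + 2) ^ 2 else 0)
      = ∑ a : V, (t a : ℤ) * (2 * ((deg G a : ℤ) + 2 * ↑(t a) + 2) ^ 2) := by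
    refine Finset.sum_congr rfl fun u _ => ?_
    have e : ∀ w : ((v : V) × Fin (t v)) × Fin (r - 1),
        (if (thornCycle G t r).Adj (Sum.inl u) (Sum.inr w) then
          ((deg G u : ℤ) + 2 * ↑(t u) + 2) ^ 2 else 0)
        = (if w.1.1 = u ∧ (w.2.val = 0 ∨ w.2.val = r - 2) then
            ((deg G u : ℤ) + 2 * ↑(t u) + 2) ^ 2 else 0) := by
      intro w; rcases w with ⟨p, j⟩
      exact if_congr thornCycle_adj_inl_inr rfl rfl
    rw [Finset.sum_congr rfl (fun w _ => e w)]
    exact sigma_pair_sum t (r-1) u (fun j => j.val = 0 ∨ j.val = r - 2)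
      (((deg G u : ℤ) + 2 * ↑(t u) + 2) ^ 2)
      (2 * ((deg G u : ℤ) + 2 * ↑(t u) + 2) ^ 2)
      (fin_sum_ends r hr _)
  -- Piece C
  have hC : (∑ w : ((v : V) × Fin (t v)) × Fin (r - 1), ∑ u : V,
        if (thornCycle G t r).Adj (Sum.inr w) (Sum.inl u) then
          (2 + ((deg G u : ℤ) + 2 * ↑(t u))) ^ 2 else 0)
      = ∑ a : V, (t a : ℤ) * (2 * (2 + ((deg G a : ℤ) + 2 * ↑(t a))) ^ 2) := by
    have e1 : ∀ w : ((v : V) × Fin (t v)) × Fin (r - 1),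
        (∑ u : V, if (thornCycle G t r).Adj (Sum.inr w) (Sum.inl u) then
          (2 + ((deg G u : ℤ) + 2 * ↑(t u))) ^ 2 else 0)
        = if (w.2.val = 0 ∨ w.2.val = r - 2) then
            (2 + ((deg G w.1.1 : ℤ) + 2 * ↑(t w.1.1))) ^ 2 else 0 := by
      intro w; rcases w with ⟨p, j⟩
      have e : ∀ u : V,
          (if (thornCycle G t r).Adj (Sum.inr (p, j)) (Sum.inl u) then
            (2 + ((deg G u : ℤ) + 2 * ↑(t u))) ^ 2 else 0)
          = if u = p.1 then (if (j.val = 0 ∨ j.val = r - 2) then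
              (2 + ((deg G u : ℤ) + 2 * ↑(t u))) ^ 2 else 0) else 0 := by
        intro u
        by_cases hu : u = p.1
        · subst hu
          by_cases hc : (j.val = 0 ∨ j.val = r - 2)
          · rw [if_pos (thornCycle_adj_inr_inl.mpr ⟨rfl, hc⟩), if_pos rfl, if_pos hc]
          · rw [if_neg (fun h => hc (thornCycle_adj_inr_inl.mp h).2), if_pos rfl, if_neg hc]
        · rw [if_neg (fun h => hu ((thornCycle_adj_inr_inl.mp h).1.symm)), if_neg hu]
      rw [Finset.sum_congr rfl (fun u _ => e u),
        Finset.sum_ite_eq' univ p.1 (fun u => if (j.val = 0 ∨ j.val = r - 2) then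
          (2 + ((deg G u : ℤ) + 2 * ↑(t u))) ^ 2 else 0)]
      simp
    rw [Finset.sum_congr rfl (fun w _ => e1 w), Fintype.sum_prod_type]
    calc (∑ p : (v : V) × Fin (t v), ∑ j : Fin (r - 1),
            if (j.val = 0 ∨ j.val = r - 2) then
              (2 + ((deg G p.1 : ℤ) + 2 * ↑(t p.1))) ^ 2 else 0)
        = ∑ p : (v : V) × Fin (t v), 2 * (2 + ((deg G p.1 : ℤ) + 2 * ↑(t p.1))) ^ 2 :=
          Finset.sum_congr rfl fun p _ => fin_sum_ends r hr _
      _ = ∑ a : V, (t a : ℤ) * (2 * (2 + ((deg G a : ℤ) + 2 * ↑(t a))) ^ 2) :=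
          sigma_const_sum t (fun a => 2 * (2 + ((deg G a : ℤ) + 2 * ↑(t a))) ^ 2)
  -- Piece D
  have hD : (∑ w : ((v : V) × Fin (t v)) × Fin (r - 1),
        ∑ w' : ((v : V) × Fin (t v)) × Fin (r - 1),
        if (thornCycle G t r).Adj (Sum.inr w) (Sum.inr w') then ((2:ℤ) + 2) ^ 2 else 0)
      = ∑ a : V, (t a : ℤ) * (32 * ((r - 1 : ℕ) : ℤ) - 32) := by
    have e1 : ∀ w : ((v : V) × Fin (t v)) × Fin (r - 1),
        (∑ w' : ((v : V) × Fin (t v)) × Fin (r - 1),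
          if (thornCycle G t r).Adj (Sum.inr w) (Sum.inr w') then ((2:ℤ) + 2) ^ 2 else 0)
        = 32 - 16 * (if (w.2.val = 0 ∨ w.2.val = r - 2) then (1:ℤ) else 0) := by
      intro w; rcases w with ⟨p, j⟩
      rw [Fintype.sum_prod_type]
      have e : ∀ (q : (v : V) × Fin (t v)) (k : Fin (r - 1)),
          (if (thornCycle G t r).Adj (Sum.inr (p, j)) (Sum.inr (q, k)) then ((2:ℤ) + 2) ^ 2 else 0)
          = if q = p then (if (j.val + 1 = k.val ∨ k.val + 1 = j.val) then (16:ℤ) else 0)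
            else 0 := by
        intro q k
        by_cases hq : q = p
        · subst hq
          by_cases hn : (j.val + 1 = k.val ∨ k.val + 1 = j.val)
          · rw [if_pos (thornCycle_adj_inr_inr.mpr ⟨rfl, hn⟩), if_pos rfl, if_pos hn]; norm_num
          · rw [if_neg (fun h => hn (thornCycle_adj_inr_inr.mp h).2), if_pos rfl, if_neg hn]
        · rw [if_neg (fun h => hq ((thornCycle_adj_inr_inr.mp h).1.symm)), if_neg hq]
      rw [Finset.sum_congr rfl (fun q _ => Finset.sum_congr rfl (fun k _ => e q k)),
        Finset.sum_comm]
      have e3 : ∀ k : Fin (r - 1),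
          (∑ q : (v : V) × Fin (t v), if q = p then
            (if (j.val + 1 = k.val ∨ k.val + 1 = j.val) then (16:ℤ) else 0) else 0)
          = (if (j.val + 1 = k.val ∨ k.val + 1 = j.val) then (16:ℤ) else 0) := by
        intro k
        rw [Finset.sum_ite_eq' univ p
          (fun _ => (if (j.val + 1 = k.val ∨ k.val + 1 = j.val) then (16:ℤ) else 0))]
        simp
      rw [Finset.sum_congr rfl (fun k _ => e3 k)]
      have h16 : ∑ k : Fin (r - 1), (if (j.val + 1 = k.val ∨ k.val + 1 = j.val) then (16:ℤ) else 0)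
          = 16 * ∑ k : Fin (r - 1), (if (j.val + 1 = k.val ∨ k.val + 1 = j.val) then (1:ℤ) else 0) := by
        rw [Finset.mul_sum]
        exact Finset.sum_congr rfl fun k _ => by split_ifs <;> ring
      rw [h16]
      have hcnt := fin_nbr_count r hr j
      linarith
    rw [Finset.sum_congr rfl (fun w _ => e1 w), Fintype.sum_prod_type]
    have e2 : ∑ k : Fin (r - 1), ((32:ℤ) - 16 * (if (k.val = 0 ∨ k.val = r - 2) then (1:ℤ) else 0))
        = 32 * ((r - 1 : ℕ) : ℤ) - 32 := by
      rw [Finset.sum_sub_distrib, Finset.sum_const, Finset.card_univ, Fintype.card_fin,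
        nsmul_eq_mul, ← Finset.mul_sum, fin_sum_ends r hr 1]
      omega
    calc (∑ p : (v : V) × Fin (t v), ∑ k : Fin (r - 1),
            ((32:ℤ) - 16 * (if (k.val = 0 ∨ k.val = r - 2) then (1:ℤ) else 0)))
        = ∑ p : (v : V) × Fin (t v), (32 * ((r - 1 : ℕ) : ℤ) - 32) :=
          Finset.sum_congr rfl fun p _ => e2
      _ = ∑ a : V, (t a : ℤ) * (32 * ((r - 1 : ℕ) : ℤ) - 32) :=
          sigma_const_sum t (fun _ => 32 * ((r - 1 : ℕ) : ℤ) - 32)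
  rw [hA, hB, hC, hD]
  -- Right-hand side
  have hR : ∀ x1 x2 x3 y1 y2 y3 : ℤ,
      2 * (x1 + 4 * x2 + 4 * x3 + 2 * y1 + 8 * y2 + (16 * (r:ℤ) - 24) * y3)
        = 2 * x1 + 4 * (2 * x2) + 4 * (2 * x3)
          + (4 * y1 + 16 * y2 + (32 * (r:ℤ) - 48) * y3) := by
    intros; ring
  rw [hR, cast_hm G, two_mul_edgeSum, two_mul_edgeSum, two_mul_edgeSum]
  -- vertex-sum identity
  have hV : (∑ a : V, (t a : ℤ) * (2 * ((deg G a : ℤ) + 2 * ↑(t a) + 2) ^ 2))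
      + (∑ a : V, (t a : ℤ) * (2 * (2 + ((deg G a : ℤ) + 2 * ↑(t a))) ^ 2))
      + (∑ a : V, (t a : ℤ) * (32 * ((r - 1 : ℕ) : ℤ) - 32))
      = 4 * (∑ i : V, (t i : ℤ) * (deg G i : ℤ) ^ 2)
        + 16 * (∑ i : V, ((deg G i : ℤ) * (t i : ℤ) ^ 2 + (deg G i : ℤ) * (t i : ℤ)
            + (t i : ℤ) ^ 3 + 2 * (t i : ℤ) ^ 2))
        + (32 * (r:ℤ) - 48) * (∑ i : V, (t i : ℤ)) := by
    rw [Finset.mul_sum, Finset.mul_sum, Finset.mul_sum, ← Finset.sum_add_distrib,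
      ← Finset.sum_add_distrib, ← Finset.sum_add_distrib, ← Finset.sum_add_distrib]
    refine Finset.sum_congr rfl fun a _ => ?_
    rw [hr1]; ring
  linear_combination hV
end
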